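/- Let n be an even integer with n ≥ 4 (say n = 2m), let t be an integer with 0 < t < n and t dividing n, and set u = n − t (so that gcd(t, u) = t and t + u = n). Then the set t·Z_n = {t·x (mod n) : x ∈ Z_n} is closed under the operation of the groupoid Z_n(t, u) (hence is a subgroupoid) and has exactly n/t elements. -/
import Mathlib


/-- If `n = 2m` is even, `t ∣ n`, `0 < t < n` and `u = n - t`, then `t·Zₙ` is a
subgroupoid of `Zₙ(t, n-t)` of order `n / t`. -/
theorem stmt_17 (n t : ℕ) (hn : 4 ≤ n) (heven : Even n) (ht : 0 < t)
    (ht' : t < n) (hdvd : t ∣ n) :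
    (∀ a ∈ Set.range (fun y : ZMod n => (t : ZMod n) * y),
      ∀ b ∈ Set.range (fun y : ZMod n => (t : ZMod n) * y),
        (t : ZMod n) * a + ((n - t : ℕ) : ZMod n) * b
          ∈ Set.range (fun y : ZMod n => (t : ZMod n) * y)) ∧
    Nat.card (Set.range (fun y : ZMod n => (t : ZMod n) * y)) = n / t := by
  constructor
  · rintro a ⟨x, rfl⟩ b ⟨y, rfl⟩
    exact ⟨(t : ZMod n) * x + ((n - t : ℕ) : ZMod n) * y, by ring⟩
  · have hne : n ≠ 0 := by omega
    have hset : Set.range (fun y : ZMod n => (t : ZMod n) * y)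
        = (AddSubgroup.zmultiples (t : ZMod n) : Set (ZMod n)) := by
      ext z
      constructor
      · rintro ⟨y, rfl⟩
        have : ∃ k : ℕ, (y : ZMod n) = (k : ZMod n) := ⟨(ZMod.val y), by
          haveI : NeZero n := ⟨hne⟩
          simp [ZMod.natCast_val, ZMod.cast_id]⟩
        obtain ⟨k, hk⟩ := this
        exact ⟨(k : ℤ), by simp [hk]; push_cast; ring⟩
      · rintro ⟨k, rfl⟩
        exact ⟨(k : ZMod n), by simp [zsmul_eq_mul]; ring⟩
    rw [hset]
    rw [SetLike.coe_sort_coe, Nat.card_zmultiples,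
      ZMod.addOrderOf_coe t hne, Nat.gcd_eq_right hdvd]
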